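/- Let $V$ be a real Hilbert space compactly embedded in a Hilbert space $H$, $K \subseteq V$ nonempty closed convex, $a$ a continuous symmetric bilinear form on $V$ coercive with constant $m > 0$, and $L \in V'$ fixed. For $g \in H$ let $u_g \in K$ be the unique solution of $a(u_g, v - u_g) \ge (g, v - u_g)_H + \langle L, v - u_g \rangle$ for all $v \in K$. If $g_n \rightharpoonup g$ weakly in $H$, then $u_{g_n} \to u_g$ strongly in $V$. -/

import Mathlib

open scoped InnerProductSpace
open Filter

/-- If `φ n ⇀ 0` weakly with uniform norm bound and `y n` stays in a compact set,
then `⟪φ n, y n⟫ → 0`. -/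
lemma weak_pair_tendsto {H : Type*} [NormedAddCommGroup H] [InnerProductSpace ℝ H]
    (φ : ℕ → H) (M : ℝ) (hM : ∀ n, ‖φ n‖ ≤ M)
    (hφ : ∀ z : H, Tendsto (fun n => ⟪φ n, z⟫_ℝ) atTop (nhds 0))
    (y : ℕ → H) (Q : Set H) (hQ : IsCompact Q) (hy : ∀ n, y n ∈ Q) :
    Tendsto (fun n => ⟪φ n, y n⟫_ℝ) atTop (nhds 0) := by
  have hM0 : 0 ≤ M := le_trans (norm_nonneg _) (hM 0)
  rw [Metric.tendsto_atTop]
  intro ε hε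
  set δ : ℝ := ε / (2 * (M + 1)) with hδdef
  have hδ : 0 < δ := by positivity
  obtain ⟨t, htfin, htcov⟩ := (Metric.totallyBounded_iff.mp hQ.totallyBounded) δ hδ
  have hEv : ∀ᶠ n in atTop, ∀ z ∈ t, |⟪φ n, z⟫_ℝ| < ε / 2 := by
    rw [eventually_all_finite htfin]
    intro z _
    have habs : Tendsto (fun n => |⟪φ n, z⟫_ℝ|) atTop (nhds 0) := by
      simpa using (hφ z).abs
    exact habs.eventually (gt_mem_nhds (show (0:ℝ) < ε / 2 by positivity))
  rw [eventually_atTop] at hEv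
  obtain ⟨N, hN⟩ := hEv
  refine ⟨N, fun n hn => ?_⟩
  obtain ⟨z, hz, hyz⟩ := Set.mem_iUnion₂.mp (htcov (hy n))
  have h1 : |⟪φ n, y n - z⟫_ℝ| ≤ M * δ := by
    calc |⟪φ n, y n - z⟫_ℝ| ≤ ‖φ n‖ * ‖y n - z‖ := abs_real_inner_le_norm _ _
      _ ≤ M * δ := by
          apply mul_le_mul (hM n) _ (norm_nonneg _) hM0
          have : dist (y n) z < δ := Metric.mem_ball.mp hyz
          rw [dist_eq_norm] at this; exact this.le
  have h2 : |⟪φ n, z⟫_ℝ| < ε / 2 := hN n hn z hz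
  have hMδ : M * δ < ε / 2 := by
    have hlt : M < M + 1 := by linarith
    have : M * δ < (M + 1) * δ := by nlinarith
    have heq : (M + 1) * δ = ε / 2 := by
      rw [hδdef]; field_simp
    linarith
  have hsplit : ⟪φ n, y n⟫_ℝ = ⟪φ n, y n - z⟫_ℝ + ⟪φ n, z⟫_ℝ := by
    rw [← inner_add_right]; congr 1; abel
  rw [Real.dist_eq, sub_zero, hsplit]
  calc |⟪φ n, y n - z⟫_ℝ + ⟪φ n, z⟫_ℝ| ≤ |⟪φ n, y n - z⟫_ℝ| + |⟪φ n, z⟫_ℝ| := abs_add_le _ _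
    _ < ε / 2 + ε / 2 := by linarith
    _ = ε := by ring

/-- Lemma 3.1(a), abstract form: if `g_n ⇀ g` weakly in `H`, then the solutions
`u_{g_n}` of the variational inequality converge strongly to `u_g` in `V`; here `V`
is compactly embedded in `H` via `T` and the sources act through the `H`-pairing. -/
theorem stmt_10 {V H : Type*}
    [NormedAddCommGroup V] [InnerProductSpace ℝ V] [CompleteSpace V]
    [NormedAddCommGroup H] [InnerProductSpace ℝ H] [CompleteSpace H]
    (T : V →L[ℝ] H) (hT : IsCompactOperator T)
    (K : Set V) (hKne : K.Nonempty) (hKcl : IsClosed K) (hKco : Convex ℝ K)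
    (a : V →L[ℝ] V →L[ℝ] ℝ) (hsym : ∀ u v : V, a u v = a v u)
    (m : ℝ) (hm : 0 < m) (hcoer : ∀ v : V, m * ‖v‖ ^ 2 ≤ a v v)
    (L : V →L[ℝ] ℝ)
    (u : H → V)
    (hu : ∀ g : H, u g ∈ K ∧
      ∀ v ∈ K, ⟪g, T (v - u g)⟫_ℝ + L (v - u g) ≤ a (u g) (v - u g))
    (g : ℕ → H) (g₀ : H)
    (hweak : ∀ y : H, Tendsto (fun n => ⟪g n, y⟫_ℝ) atTop (nhds ⟪g₀, y⟫_ℝ)) :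
    Tendsto (fun n => u (g n)) atTop (nhds (u g₀)) := by
  set w : ℕ → V := fun n => u (g n) - u g₀ with hw
  -- Key inequality: m ‖w n‖² ≤ ⟪g n - g₀, T (w n)⟫
  have key : ∀ n, m * ‖w n‖ ^ 2 ≤ ⟪g n - g₀, T (w n)⟫_ℝ := by
    intro n
    have h1 := (hu (g n)).2 (u g₀) (hu g₀).1
    have h2 := (hu g₀).2 (u (g n)) (hu (g n)).1
    have hrw : u g₀ - u (g n) = -(w n) := by simp [hw]
    rw [hrw] at h1
    have haw : a (u (g n)) (-(w n)) + a (u g₀) (w n) = -(a (w n) (w n)) := by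
      have hsub : a (u (g n)) (w n) - a (u g₀) (w n) = a (w n) (w n) := by
        rw [← ContinuousLinearMap.sub_apply, ← map_sub]
      simp only [map_neg]; linarith
    have hTin : ⟪g n, T (-(w n))⟫_ℝ = -⟪g n, T (w n)⟫_ℝ := by
      rw [map_neg, inner_neg_right]
    have hL : L (-(w n)) = -(L (w n)) := map_neg L _
    have h2' : ⟪g₀, T (w n)⟫_ℝ + L (w n) ≤ a (u g₀) (w n) := by
      have : u (g n) - u g₀ = w n := rfl
      rw [this] at h2; exact h2
    have h1' : -⟪g n, T (w n)⟫_ℝ + -(L (w n)) ≤ a (u (g n)) (-(w n)) := by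
      rw [← hTin, ← hL]; exact h1
    have hfin : a (w n) (w n) ≤ ⟪g n - g₀, T (w n)⟫_ℝ := by
      rw [inner_sub_left]; linarith
    linarith [hcoer (w n)]
  -- uniform bound on ‖g n‖
  obtain ⟨C, hC⟩ : ∃ C, ∀ n, ‖(innerSL ℝ (g n) : H →L[ℝ] ℝ)‖ ≤ C := by
    apply banach_steinhaus
    intro y
    obtain ⟨B, hB⟩ := ((hweak y).norm).bddAbove_range
    exact ⟨B, fun n => hB ⟨n, rfl⟩⟩
  have hgn : ∀ n, ‖g n - g₀‖ ≤ C + ‖g₀‖ := by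
    intro n
    have h1 : ‖g n‖ ≤ C := by rw [← innerSL_apply_norm (𝕜 := ℝ) (g n)]; exact hC n
    calc ‖g n - g₀‖ ≤ ‖g n‖ + ‖g₀‖ := norm_sub_le _ _
      _ ≤ C + ‖g₀‖ := by linarith
  set M : ℝ := C + ‖g₀‖ with hM
  have hM0 : 0 ≤ M := le_trans (norm_nonneg _) (hgn 0)
  -- uniform bound on ‖w n‖
  set R : ℝ := M * ‖T‖ / m with hR
  have hwR : ∀ n, ‖w n‖ ≤ R := by
    intro n
    have h1 : ⟪g n - g₀, T (w n)⟫_ℝ ≤ M * ‖T‖ * ‖w n‖ := by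
      calc ⟪g n - g₀, T (w n)⟫_ℝ ≤ ‖g n - g₀‖ * ‖T (w n)‖ := real_inner_le_norm _ _
        _ ≤ M * (‖T‖ * ‖w n‖) := by
            apply mul_le_mul (hgn n) (T.le_opNorm _) (norm_nonneg _) hM0
        _ = M * ‖T‖ * ‖w n‖ := by ring
    have h2 : m * ‖w n‖ ^ 2 ≤ M * ‖T‖ * ‖w n‖ := le_trans (key n) h1
    rcases eq_or_lt_of_le (norm_nonneg (w n)) with h | h
    · rw [← h, hR]; positivity
    · rw [hR, le_div_iff₀ hm]
      nlinarith
  -- compact set containing T (w n)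
  obtain ⟨Q, hQc, hQ⟩ : ∃ Q : Set H, IsCompact Q ∧ ⇑T '' Metric.closedBall 0 R ⊆ Q :=
    hT.image_closedBall_subset_compact (𝕜₁ := ℝ) (f := (T : V →ₗ[ℝ] H)) R
  have hTwQ : ∀ n, T (w n) ∈ Q := by
    intro n
    apply hQ
    exact ⟨w n, by simpa [Metric.mem_closedBall, dist_eq_norm] using hwR n, rfl⟩
  -- weak convergence of g n - g₀ to 0
  have hφ : ∀ z : H, Tendsto (fun n => ⟪g n - g₀, z⟫_ℝ) atTop (nhds 0) := by
    intro z
    have := (hweak z).sub_const ⟪g₀, z⟫_ℝ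
    simpa [inner_sub_left] using this
  -- conclude
  have hc : Tendsto (fun n => ⟪g n - g₀, T (w n)⟫_ℝ) atTop (nhds 0) :=
    weak_pair_tendsto (fun n => g n - g₀) M hgn hφ (fun n => T (w n)) Q hQc hTwQ
  have hsq : Tendsto (fun n => ‖w n‖ ^ 2) atTop (nhds 0) := by
    have hub : ∀ n, ‖w n‖ ^ 2 ≤ ⟪g n - g₀, T (w n)⟫_ℝ / m := by
      intro n; rw [le_div_iff₀ hm]; linarith [key n]
    have hdiv : Tendsto (fun n => ⟪g n - g₀, T (w n)⟫_ℝ / m) atTop (nhds 0) := by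
      simpa using hc.div_const m
    exact squeeze_zero (fun n => by positivity) hub hdiv
  have hnorm : Tendsto (fun n => ‖w n‖) atTop (nhds 0) := by
    have := hsq.sqrt
    simp only [Real.sqrt_zero] at this
    refine this.congr fun n => ?_
    rw [Real.sqrt_sq (norm_nonneg _)]
  rw [tendsto_iff_norm_sub_tendsto_zero]
  exact hnorm
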